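/- The generating functions sum over π ∈ PF(1,b,m) of y^{lel(π)} and sum over π ∈ PF(1,b,m) of x^{ones(π)} are both equal to t(t + mb)^{m-1} (in the respective variable t). -/

import Mathlib

namespace PFaux

lemma small_div {M s : ℤ} (hM : 0 < M) (h0 : 0 ≤ s) (h2 : s < 2 * M) :
    s / M = if M ≤ s then 1 else 0 := by
  rcases le_or_gt M s with h | h
  · have h1 : s = (s - M) + M * 1 := by ring
    rw [h1, Int.add_mul_ediv_left _ _ (by omega),
      Int.ediv_eq_zero_of_lt (by omega) (by omega)]
    simp [h]
  · rw [Int.ediv_eq_zero_of_lt h0 h]; simp [not_le.2 h]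

/-- window lemma for ediv -/
lemma ediv_window {M : ℤ} (hM : 0 < M) (A u : ℤ) (hu0 : 0 ≤ u) (huM : u ≤ M) :
    (A + u) / M - A / M = if M ≤ A % M + u then 1 else 0 := by
  have h1 : A + u = (A % M + u) + M * (A / M) := by
    have := Int.emod_add_mul_ediv A M; ring_nf; omega
  rw [h1, Int.add_mul_ediv_left _ _ (by omega)]
  have h2 : 0 ≤ A % M := Int.emod_nonneg A (by omega)
  have h3 : A % M < M := Int.emod_lt_of_pos A hM
  rw [small_div hM (by omega) (by omega)]
  omega

end PFaux

namespace PFaux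
open Finset

variable {m b x : ℕ} {M : ℤ} {w : Fin m → ℤ}

def Q (M : ℤ) (w : Fin m → ℤ) (y : ℤ) : ℤ := ∑ j, (y - w j - 1) / M

def Phi (b M : ℤ) (w : Fin m → ℤ) (y : ℤ) : ℤ := b * Q M w y - y

def Good (m b : ℕ) (M : ℤ) (w : Fin m → ℤ) (d : ℤ) : Prop :=
  ∀ t : ℕ, 1 ≤ t → t ≤ m → Q M w (d + t * b) ≤ Q M w d + t - 1

section basic
variable (hM : 0 < M)
include hM

lemma Q_mono {y z : ℤ} (h : y ≤ z) : Q M w y ≤ Q M w z :=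
  Finset.sum_le_sum fun j _ => Int.ediv_le_ediv hM (by omega)

lemma Q_add_M (y : ℤ) : Q M w (y + M) = Q M w y + m := by
  unfold Q
  have : ∀ j : Fin m, (y + M - w j - 1) / M = (y - w j - 1) / M + 1 := by
    intro j
    have h1 : y + M - w j - 1 = (y - w j - 1) + M * 1 := by ring
    rw [h1, Int.add_mul_ediv_left _ _ (by omega)]
  rw [Finset.sum_congr rfl fun j _ => this j, Finset.sum_add_distrib]
  simp [Finset.card_univ]

lemma Phi_add_M {b : ℤ} (y : ℤ) (hMm : M = x + m * b) :
    Phi b M w (y + M) = Phi b M w y - x := by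
  unfold Phi; rw [Q_add_M hM]; ring_nf; rw [hMm]; ring

lemma Phi_le_of_le {b : ℤ} (hb : 0 ≤ b) {y z : ℤ} (h : y ≤ z) :
    Phi b M w y ≤ Phi b M w z + (z - y) := by
  unfold Phi
  have := Q_mono (w := w) hM h
  nlinarith

end basic

end PFaux

namespace PFaux
open Finset

noncomputable instance {m b : ℕ} {M : ℤ} {w : Fin m → ℤ} : DecidablePred (Good m b M w) :=
  Classical.decPred _

variable {m b x : ℕ} {M : ℤ} {w : Fin m → ℤ}

section main
variable (hb : 0 < b) (hm : 0 < m) (hMm : M = (x : ℤ) + m * b)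
include hb hm hMm

lemma hMpos : 0 < M := by
  rw [hMm]
  have : (1:ℤ) ≤ (m:ℤ) * b := by
    have : (1:ℤ) ≤ (m:ℤ) := by exact_mod_cast hm
    have h2 : (1:ℤ) ≤ (b:ℤ) := by exact_mod_cast hb
    nlinarith
  have : (0:ℤ) ≤ (x:ℤ) := Int.natCast_nonneg x
  omega

lemma Q_add_kM (y : ℤ) : ∀ k : ℕ, Q M w (y + k * M) = Q M w y + k * m := by
  intro k
  induction k with
  | zero => simp
  | succ k ih =>
    have h1 : y + (k+1 : ℕ) * M = (y + k * M) + M := by push_cast; ring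
    rw [h1, Q_add_M (hMpos hb hm hMm), ih]
    push_cast; ring

lemma Phi_add_Mb (y : ℤ) :
    Phi b M w (y + M * b) = Phi b M w y - x * b := by
  unfold Phi
  have h1 : y + M * b = y + (b : ℕ) * M := by push_cast; ring
  rw [h1, Q_add_kM hb hm hMm]
  have : ((b:ℤ)) * ((m:ℤ)*(b:ℤ)) - M * b = -(x*b) := by rw [hMm]; ring
  push_cast
  nlinarith [this]

lemma good_iff_phi (d : ℤ) :
    Good m b M w d ↔ ∀ t : ℕ, 1 ≤ t → Phi b M w (d + t * b) ≤ Phi b M w d - b := by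
  have hM := hMpos hb hm hMm
  have hbz : (0:ℤ) < (b:ℤ) := by exact_mod_cast hb
  constructor
  · intro hg t
    induction t using Nat.strong_induction_on with
    | _ t ih =>
      intro ht1
      rcases le_or_gt t m with htm | htm
      · have := hg t ht1 htm
        unfold Phi
        nlinarith [this]
      · -- t > m : reduce
        have h1 : 1 ≤ t - m := by omega
        have h2 : t - m < t := by omega
        have key := ih (t - m) h2 h1
        -- Phi (d + t*b) ≤ Phi (d + (t-m)*b)
        have hsplit : d + (t:ℤ) * b = (d + ((t - m : ℕ):ℤ) * b - x) + M := by
          rw [hMm]; push_cast [Nat.cast_sub (le_of_lt htm)]; ring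
        have e1 : Phi b M w (d + (t:ℤ)*b) = Phi b M w (d + ((t-m:ℕ):ℤ)*b - x) - x := by
          rw [hsplit, Phi_add_M hM _ hMm]
        have e2 : Phi b M w (d + ((t-m:ℕ):ℤ)*b - x) ≤ Phi b M w (d + ((t-m:ℕ):ℤ)*b) + x := by
          have := Phi_le_of_le (w := w) hM (b := (b:ℤ)) (le_of_lt hbz)
            (y := d + ((t-m:ℕ):ℤ)*b - x) (z := d + ((t-m:ℕ):ℤ)*b) (by
              have : (0:ℤ) ≤ (x:ℤ) := Int.natCast_nonneg x
              omega)
          calc Phi b M w (d + ((t-m:ℕ):ℤ)*b - x)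
              ≤ Phi b M w (d + ((t-m:ℕ):ℤ)*b) + ((d + ((t-m:ℕ):ℤ)*b) - (d + ((t-m:ℕ):ℤ)*b - x)) := this
            _ = Phi b M w (d + ((t-m:ℕ):ℤ)*b) + x := by ring
        omega
  · intro h t ht1 htm
    have := h t ht1
    unfold Phi at this
    have hbz2 : (1:ℤ) ≤ (b:ℤ) := by exact_mod_cast hb
    nlinarith [this]

end main

/-- running maximum of `Phi` along the forward `b`-grid. -/
noncomputable def Hm (m b x : ℕ) (M : ℤ) (w : Fin m → ℤ) (y : ℤ) : ℤ :=
  ((Finset.range (x + m * b + 1)).image fun t : ℕ => Phi b M w (y + t * b)).max'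
    (Finset.Nonempty.image ⟨0, Finset.mem_range.2 (Nat.succ_pos _)⟩ _)

lemma H_exists (y : ℤ) : ∃ t : ℕ, Hm m b x M w y = Phi b M w (y + t * b) := by
  have := Finset.max'_mem _ (Finset.Nonempty.image (s := Finset.range (x + m*b + 1))
    ⟨0, Finset.mem_range.2 (Nat.succ_pos _)⟩ (fun t : ℕ => Phi b M w (y + t * b)))
  rw [Finset.mem_image] at this
  obtain ⟨t, _, ht⟩ := this
  exact ⟨t, ht.symm⟩

lemma le_H_small (y : ℤ) {t : ℕ} (h : t < x + m * b + 1) :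
    Phi b M w (y + t * b) ≤ Hm m b x M w y := by
  apply Finset.le_max'
  exact Finset.mem_image.2 ⟨t, Finset.mem_range.2 h, rfl⟩

section main2
variable (hb : 0 < b) (hm : 0 < m) (hMm : M = (x : ℤ) + m * b)
include hb hm hMm

lemma le_H (y : ℤ) : ∀ t : ℕ, Phi b M w (y + t * b) ≤ Hm m b x M w y := by
  intro t
  induction t using Nat.strong_induction_on with
  | _ t ih =>
    rcases lt_or_ge t (x + m * b + 1) with h | h
    · exact le_H_small y h
    · set Mn := x + m * b with hMn
      have h2 : t - Mn < t := by
        have : 0 < Mn := by positivity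
        omega
      have hsplit : y + (t:ℤ) * b = (y + ((t - Mn : ℕ):ℤ) * b) + M * b := by
        have hc : ((t - Mn : ℕ):ℤ) = (t:ℤ) - Mn := by
          push_cast [Nat.cast_sub (by omega : Mn ≤ t)]; ring
        rw [hc, hMm, hMn]; push_cast; ring
      rw [hsplit, Phi_add_Mb hb hm hMm]
      have hxb : (0:ℤ) ≤ (x:ℤ) * b := by positivity
      have := ih (t - Mn) h2
      omega

lemma H_ge_phi (y : ℤ) : Phi b M w y ≤ Hm m b x M w y := by
  have := le_H_small (m := m) (b := b) (x := x) (M := M) (w := w) y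
    (t := 0) (Nat.succ_pos _)
  simpa using this

lemma H_step_ge (y : ℤ) : Hm m b x M w (y + b) ≤ Hm m b x M w y := by
  obtain ⟨t, ht⟩ := H_exists (m := m) (b := b) (x := x) (M := M) (w := w) (y + b)
  rw [ht]
  have : y + (b:ℤ) + t * b = y + ((t+1 : ℕ):ℤ) * b := by push_cast; ring
  rw [this]
  exact le_H hb hm hMm y (t+1)

lemma le_H_shift (y : ℤ) : ∀ t : ℕ, 1 ≤ t →
    Phi b M w (y + t * b) ≤ Hm m b x M w (y + b) := by
  intro t ht
  obtain ⟨s, rfl⟩ : ∃ s, t = s + 1 := ⟨t - 1, by omega⟩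
  have : y + ((s+1 : ℕ):ℤ) * b = (y + b) + s * b := by push_cast; ring
  rw [this]
  exact le_H hb hm hMm (y + b) s

lemma H_shift_exists (y : ℤ) :
    ∃ t : ℕ, 1 ≤ t ∧ Hm m b x M w (y + b) = Phi b M w (y + t * b) := by
  obtain ⟨s, hs⟩ := H_exists (m := m) (b := b) (x := x) (M := M) (w := w) (y + b)
  refine ⟨s + 1, by omega, ?_⟩
  rw [hs]; congr 1; push_cast; ring

lemma H_step_le (y : ℤ) : Hm m b x M w y ≤ Hm m b x M w (y + b) + b := by
  have hM := hMpos hb hm hMm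
  obtain ⟨t, ht⟩ := H_exists (m := m) (b := b) (x := x) (M := M) (w := w) y
  rcases Nat.eq_zero_or_pos t with rfl | htpos
  · simp only [Nat.cast_zero, zero_mul, add_zero] at ht
    rw [ht]
    have h1 : Phi b M w y ≤ Phi b M w (y + b) + b := by
      have := Phi_le_of_le (w := w) hM (b := (b:ℤ)) (by positivity)
        (y := y) (z := y + b) (by
          have : (0:ℤ) ≤ (b:ℤ) := by positivity
          omega)
      calc Phi b M w y ≤ Phi b M w (y + b) + (y + b - y) := this
        _ = Phi b M w (y + b) + b := by ring
    have h2 : Phi b M w (y + b) ≤ Hm m b x M w (y + b) := H_ge_phi hb hm hMm (y + b)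
    omega
  · rw [ht]
    have h1 := le_H_shift (w := w) hb hm hMm y t htpos
    have : (0:ℤ) ≤ (b:ℤ) := by positivity
    omega

lemma H_dvd (y : ℤ) : (b : ℤ) ∣ Hm m b x M w y + y := by
  obtain ⟨t, ht⟩ := H_exists (m := m) (b := b) (x := x) (M := M) (w := w) y
  rw [ht]
  unfold Phi
  exact ⟨Q M w (y + t*b) - t, by ring⟩

lemma good_iff_H (d : ℤ) :
    Good m b M w d ↔ Hm m b x M w d = Hm m b x M w (d + b) + b := by
  have hbz : (0:ℤ) < (b:ℤ) := by exact_mod_cast hb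
  rw [good_iff_phi hb hm hMm]
  constructor
  · intro h
    have h1 : Hm m b x M w (d + b) ≤ Phi b M w d - b := by
      obtain ⟨t, ht1, ht2⟩ := H_shift_exists hb hm hMm d
      rw [ht2]; exact h t ht1
    have h2 : Phi b M w d ≤ Hm m b x M w d := H_ge_phi hb hm hMm d
    have h3 := H_step_le (w := w) hb hm hMm d
    -- also Hm d ≥ Hm (d+b) + b :
    omega
  · intro h t ht
    -- first: Phi d = Hm d
    have h2 : Phi b M w d ≤ Hm m b x M w d := H_ge_phi hb hm hMm d
    have h4 : Phi b M w d = Hm m b x M w d := by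
      by_contra hne
      have hlt : Phi b M w d < Hm m b x M w d := lt_of_le_of_ne h2 hne
      obtain ⟨s, hs⟩ := H_exists (m := m) (b := b) (x := x) (M := M) (w := w) d
      rcases Nat.eq_zero_or_pos s with rfl | hspos
      · simp only [Nat.cast_zero, zero_mul, add_zero] at hs; omega
      · have := le_H_shift (w := w) hb hm hMm d s hspos
        rw [← hs] at this
        omega
    have h5 := le_H_shift (w := w) hb hm hMm d t ht
    omega

lemma H_add_Mb (y : ℤ) :
    Hm m b x M w (y + M * b) = Hm m b x M w y - x * b := by
  apply le_antisymm
  · obtain ⟨t, ht⟩ := H_exists (m := m) (b := b) (x := x) (M := M) (w := w) (y + M * b)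
    rw [ht]
    have : y + M * b + t * b = (y + t * b) + M * b := by ring
    rw [this, Phi_add_Mb hb hm hMm]
    have := le_H (w := w) hb hm hMm y t
    omega
  · obtain ⟨t, ht⟩ := H_exists (m := m) (b := b) (x := x) (M := M) (w := w) y
    rw [ht]
    have h1 : Phi b M w (y + t * b) - x * b = Phi b M w ((y + M*b) + t * b) := by
      have : y + M * b + t * b = (y + t * b) + M * b := by ring
      rw [this, Phi_add_Mb hb hm hMm]
    rw [h1]
    exact le_H hb hm hMm (y + M * b) t

lemma H_step_cases (y : ℤ) :
    Hm m b x M w y - Hm m b x M w (y + b) = 0 ∨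
    Hm m b x M w y - Hm m b x M w (y + b) = b := by
  have h1 := H_step_ge (w := w) hb hm hMm y
  have h2 := H_step_le (w := w) hb hm hMm y
  have h3 : (b:ℤ) ∣ (Hm m b x M w y - Hm m b x M w (y + b)) := by
    have d1 := H_dvd (m := m) (b := b) (x := x) (M := M) (w := w) hb hm hMm y
    have d2 := H_dvd (m := m) (b := b) (x := x) (M := M) (w := w) hb hm hMm (y + (b:ℤ))
    have : Hm m b x M w y - Hm m b x M w (y+b) =
      (Hm m b x M w y + y) - (Hm m b x M w (y+b) + (y+b)) + b := by ring
    rw [this]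
    exact dvd_add (dvd_sub d1 d2) dvd_rfl
  obtain ⟨q, hq⟩ := h3
  have hbz : (0:ℤ) < (b:ℤ) := by exact_mod_cast hb
  have hq0 : 0 ≤ q := by nlinarith
  have hq1 : q ≤ 1 := by nlinarith
  interval_cases q
  · left; omega
  · right; omega

end main2
end PFaux

namespace PFaux
open Finset

variable {m b x : ℕ} {M : ℤ} {w : Fin m → ℤ}

section count
variable (hb : 0 < b) (hm : 0 < m) (hMm : M = (x : ℤ) + m * b)
include hb hm hMm

lemma count_grid (y : ℤ) : ∀ L : ℕ,
    (((Finset.range L).filter fun t : ℕ => Good m b M w (y + (t:ℤ) * b)).card : ℤ) * b =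
      Hm m b x M w y - Hm m b x M w (y + L * b) := by
  intro L
  induction L with
  | zero => simp
  | succ L ih =>
    rw [Finset.range_add_one, Finset.filter_insert]
    have hcast : y + ((L+1 : ℕ):ℤ) * b = (y + L * b) + b := by push_cast; ring
    by_cases hG : Good m b M w (y + L * b)
    · rw [if_pos hG, Finset.card_insert_of_notMem (by simp)]
      have hstep : Hm m b x M w (y + L*b) = Hm m b x M w ((y + L*b) + b) + b :=
        (good_iff_H (w := w) hb hm hMm _).1 hG
      rw [hcast]
      push_cast
      linear_combination ih - hstep
    · rw [if_neg hG]
      have hstep : Hm m b x M w (y + L*b) - Hm m b x M w ((y + L*b) + b) = 0 := by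
        rcases H_step_cases (w := w) hb hm hMm (y + L * b) with h | h
        · exact h
        · exfalso
          exact hG ((good_iff_H (w := w) hb hm hMm _).2 (by omega))
      rw [hcast]
      push_cast
      linear_combination ih - hstep

lemma count_window (y : ℤ) :
    ((Finset.range (x + m * b)).filter fun t : ℕ => Good m b M w (y + (t:ℤ) * b)).card = x := by
  have h := count_grid (w := w) hb hm hMm y (x + m * b)
  have hMb : y + ((x + m*b : ℕ):ℤ) * b = y + M * b := by rw [hMm]; push_cast; ring
  rw [hMb, H_add_Mb (w := w) hb hm hMm] at h
  have hbz : (0:ℤ) < (b:ℤ) := by exact_mod_cast hb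
  have : (((Finset.range (x + m * b)).filter fun t : ℕ => Good m b M w (y + (t:ℤ) * b)).card : ℤ) = x := by
    nlinarith [h]
  exact_mod_cast this

lemma Good_add_M (d : ℤ) : Good m b M w (d + M) ↔ Good m b M w d := by
  have hM := hMpos hb hm hMm
  unfold Good
  have key : ∀ z : ℤ, Q M w (z + M) = Q M w z + m := fun z => Q_add_M hM z
  constructor
  · intro h t ht1 ht2
    have := h t ht1 ht2
    have e1 : d + M + t * b = (d + t * b) + M := by ring
    rw [e1, key, key] at this
    omega
  · intro h t ht1 ht2
    have := h t ht1 ht2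
    have e1 : d + M + t * b = (d + t * b) + M := by ring
    rw [e1, key, key]
    omega

lemma Good_add_kM (d : ℤ) (k : ℕ) : Good m b M w (d + k * M) ↔ Good m b M w d := by
  induction k with
  | zero => simp
  | succ k ih =>
    have e1 : d + ((k+1 : ℕ):ℤ) * M = (d + k * M) + M := by push_cast; ring
    rw [e1, Good_add_M (w := w) hb hm hMm, ih]

theorem good_count :
    ((Finset.range (x + m * b)).filter fun d : ℕ => Good m b M w (d : ℤ)).card = x := by
  set Mn := x + m * b with hMn
  have hMnpos : 0 < Mn := by positivity
  set S := (Finset.range (b * Mn)).filter (fun z : ℕ => Good m b M w (z : ℤ)) with hS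
  -- first computation : card S = b * x
  have hA : S.card = b * x := by
    have hfib : S.card = ∑ y ∈ Finset.range b, (S.filter fun z => z % b = y).card := by
      apply Finset.card_eq_sum_card_fiberwise
      intro z hz
      exact Finset.mem_range.2 (Nat.mod_lt _ hb)
    rw [hfib]
    have hyx : ∀ y ∈ Finset.range b, (S.filter fun z => z % b = y).card = x := by
      intro y hy
      have hy' : y < b := Finset.mem_range.1 hy
      have := count_window (w := w) hb hm hMm (y : ℤ)
      rw [← this]
      apply Finset.card_nbij' (fun z => z / b) (fun t => y + t * b)
      · intro z hz
        simp only [Finset.mem_coe, hS, Finset.mem_filter, Finset.mem_range] at hz ⊢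
        obtain ⟨⟨hz1, hz2⟩, hz3⟩ := hz
        constructor
        · exact Nat.div_lt_of_lt_mul hz1
        · have he : ((y : ℤ) + (z / b : ℕ) * b) = (z : ℤ) := by
            have : y + (z / b) * b = z := by
              have h9 := Nat.mod_add_div' z b; omega
            exact_mod_cast congrArg (Nat.cast : ℕ → ℤ) this
          rw [he]; exact hz2
      · intro t ht
        simp only [Finset.mem_coe, hS, Finset.mem_filter, Finset.mem_range] at ht ⊢
        obtain ⟨ht1, ht2⟩ := ht
        refine ⟨⟨?_, ?_⟩, ?_⟩
        · have h1 : y + t * b < (t+1) * b := by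
            have : (t+1) * b = b + t * b := by ring
            omega
          have h2 : (t+1) * b ≤ Mn * b := Nat.mul_le_mul_right _ (by omega)
          have h3 : Mn * b = b * Mn := Nat.mul_comm _ _
          omega
        · have he : ((y + t * b : ℕ) : ℤ) = (y : ℤ) + t * b := by push_cast; ring
          rw [he]; exact ht2
        · simp [Nat.add_mul_mod_self_right, Nat.mod_eq_of_lt hy']
      · intro z hz
        simp only [Finset.mem_coe, hS, Finset.mem_filter, Finset.mem_range] at hz
        obtain ⟨⟨hz1, hz2⟩, hz3⟩ := hz
        have h9 := Nat.mod_add_div' z b; dsimp only; omega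
      · intro t ht
        simp only [Finset.mem_coe, Finset.mem_filter, Finset.mem_range] at ht
        have : (y + t * b) / b = t := by
          rw [Nat.add_mul_div_right _ _ hb, Nat.div_eq_of_lt hy']; omega
        omega
    rw [Finset.sum_congr rfl hyx, Finset.sum_const, Finset.card_range, smul_eq_mul]
  -- second computation : card S = b * target
  have hB : S.card = b * ((Finset.range Mn).filter fun d : ℕ => Good m b M w (d : ℤ)).card := by
    have hfib : S.card = ∑ k ∈ Finset.range b, (S.filter fun z => z / Mn = k).card := by
      apply Finset.card_eq_sum_card_fiberwise
      intro z hz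
      simp only [Finset.mem_coe, hS, Finset.mem_filter, Finset.mem_range] at hz
      exact Finset.mem_range.2 (Nat.div_lt_of_lt_mul (by rw [Nat.mul_comm Mn b]; exact hz.1))
    rw [hfib]
    have hyx : ∀ k ∈ Finset.range b, (S.filter fun z => z / Mn = k).card =
        ((Finset.range Mn).filter fun d : ℕ => Good m b M w (d : ℤ)).card := by
      intro k hk
      have hk' : k < b := Finset.mem_range.1 hk
      apply Finset.card_nbij' (fun z => z % Mn) (fun d => d + k * Mn)
      · intro z hz
        simp only [Finset.mem_coe, hS, Finset.mem_filter, Finset.mem_range] at hz ⊢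
        obtain ⟨⟨hz1, hz2⟩, hz3⟩ := hz
        refine ⟨Nat.mod_lt _ hMnpos, ?_⟩
        have he : (z : ℤ) = ((z % Mn : ℕ) : ℤ) + (k : ℕ) * M := by
          have h8 : (Mn : ℤ) = M := by rw [hMm, hMn]; push_cast; ring
          rw [← h8]
          have h9 : z % Mn + k * Mn = z := by
            have h10 := Nat.mod_add_div' z Mn
            have : z / Mn * Mn = k * Mn := by rw [hz3]
            omega
          exact_mod_cast congrArg (Nat.cast : ℕ → ℤ) h9.symm
        rw [he] at hz2
        exact (Good_add_kM (w := w) hb hm hMm _ k).1 hz2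
      · intro d hd
        simp only [Finset.mem_coe, hS, Finset.mem_filter, Finset.mem_range] at hd ⊢
        obtain ⟨hd1, hd2⟩ := hd
        refine ⟨⟨?_, ?_⟩, ?_⟩
        · have h1 : d + k * Mn < (k+1) * Mn := by
            have : (k+1) * Mn = Mn + k * Mn := by ring
            omega
          have h2 : (k+1) * Mn ≤ b * Mn := Nat.mul_le_mul_right _ (by omega)
          omega
        · have he : ((d + k * Mn : ℕ) : ℤ) = (d : ℤ) + (k : ℕ) * M := by
            have h8 : (Mn : ℤ) = M := by rw [hMm, hMn]; push_cast; ring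
            rw [← h8]; push_cast; ring
          rw [he]
          exact (Good_add_kM (w := w) hb hm hMm _ k).2 hd2
        · rw [Nat.add_mul_div_right _ _ hMnpos, Nat.div_eq_of_lt hd1]; omega
      · intro z hz
        simp only [Finset.mem_coe, hS, Finset.mem_filter, Finset.mem_range] at hz
        obtain ⟨⟨hz1, hz2⟩, hz3⟩ := hz
        rw [← hz3]
        exact Nat.mod_add_div' z Mn
      · intro d hd
        simp only [Finset.mem_coe, Finset.mem_filter, Finset.mem_range] at hd
        dsimp only; rw [Nat.add_mul_mod_self_right, Nat.mod_eq_of_lt hd.1]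
    rw [Finset.sum_congr rfl hyx, Finset.sum_const, Finset.card_range, smul_eq_mul]
  have : b * x = b * ((Finset.range Mn).filter fun d : ℕ => Good m b M w (d : ℤ)).card := by
    rw [← hA, hB]
  exact (Nat.eq_of_mul_eq_mul_left hb this).symm

end count
end PFaux

namespace PFaux
open Finset

section zmod
variable {m b x : ℕ}

def wfun (x m b : ℕ) (g : Fin m → ZMod (x + m * b)) : Fin m → ℤ :=
  fun j => ((x + m * b : ℕ) : ℤ) - 1 - ((g j).val : ℤ)

lemma card_tail (hb : 0 < b) (hm : 0 < m) (g : Fin m → ZMod (x + m * b)) (c : ZMod (x + m * b))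
    (u : ℕ) (hu : u ≤ x + m * b) :
    ((Finset.univ.filter fun j => (x + m * b) - u ≤ (g j + c).val).card : ℤ) =
      Q ((x + m*b : ℕ) : ℤ) (wfun x m b g) (((c.val : ℕ) : ℤ) + u) -
        Q ((x + m*b : ℕ) : ℤ) (wfun x m b g) ((c.val : ℕ) : ℤ) := by
  haveI : NeZero (x + m * b) := ⟨by positivity⟩
  have hMnpos : 0 < x + m * b := by positivity
  have hM : (0:ℤ) < ((x + m * b : ℕ) : ℤ) := by exact_mod_cast hMnpos
  unfold Q wfun
  rw [← Finset.sum_sub_distrib]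
  have hterm : ∀ j : Fin m,
      ((c.val : ℤ) + u - (((x + m*b : ℕ):ℤ) - 1 - ((g j).val : ℤ)) - 1) / ((x + m*b : ℕ):ℤ) -
        ((c.val : ℤ) - (((x + m*b : ℕ):ℤ) - 1 - ((g j).val : ℤ)) - 1) / ((x + m*b : ℕ):ℤ) =
      if (x + m * b) - u ≤ (g j + c).val then 1 else 0 := by
    intro j
    have e1 : (c.val : ℤ) + u - (((x + m*b : ℕ):ℤ) - 1 - ((g j).val : ℤ)) - 1 =
        ((c.val : ℤ) - (((x + m*b : ℕ):ℤ) - 1 - ((g j).val : ℤ)) - 1) + u := by ring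
    rw [e1, ediv_window hM _ u (by positivity) (by exact_mod_cast hu)]
    have e2 : ((c.val : ℤ) - (((x + m*b : ℕ):ℤ) - 1 - ((g j).val : ℤ)) - 1) % ((x + m*b : ℕ):ℤ)
        = ((g j + c).val : ℤ) := by
      have e3 : (c.val : ℤ) - (((x + m*b : ℕ):ℤ) - 1 - ((g j).val : ℤ)) - 1 =
          ((c.val + (g j).val : ℕ) : ℤ) - ((x + m*b : ℕ):ℤ) := by push_cast; ring
      rw [e3]
      rw [show (((c.val + (g j).val : ℕ) : ℤ) - ((x + m*b : ℕ):ℤ)) % ((x + m*b : ℕ):ℤ) =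
          ((c.val + (g j).val : ℕ) : ℤ) % ((x + m*b : ℕ):ℤ) by simp [Int.sub_emod]]
      have e4 : ((c.val + (g j).val : ℕ) : ℤ) % ((x + m*b : ℕ):ℤ) =
          (((c.val + (g j).val) % (x + m*b) : ℕ) : ℤ) := by push_cast; ring
      rw [e4]
      congr 1
      rw [ZMod.val_add, Nat.add_comm]
    rw [e2]
    have hval : (g j + c).val < x + m * b := ZMod.val_lt _
    by_cases h : (x + m * b) - u ≤ (g j + c).val
    · rw [if_pos h, if_pos (by exact_mod_cast (by omega : ((x+m*b : ℕ):ℤ) ≤ ((g j + c).val : ℤ) + u))]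
    · rw [if_neg h, if_neg (by
        intro hcon
        have h2 : (x + m * b) ≤ (g j + c).val + u := by exact_mod_cast hcon
        omega)]
  rw [Finset.sum_congr rfl fun j _ => hterm j, Finset.sum_boole]

lemma goodZ_iff (hb : 0 < b) (hm : 0 < m) (g : Fin m → ZMod (x + m * b)) (c : ZMod (x + m * b)) :
    ((∀ i : ℕ, i < m →
        i + 1 ≤ (Finset.univ.filter fun j => (g j + c).val + 1 ≤ x + i * b).card) ↔
      Good m b ((x + m*b : ℕ) : ℤ) (wfun x m b g) ((c.val : ℕ) : ℤ)) := by
  haveI : NeZero (x + m * b) := ⟨by positivity⟩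
  have key : ∀ t : ℕ, 1 ≤ t → t ≤ m →
      ((Finset.univ.filter fun j => (g j + c).val + 1 ≤ x + (m - t) * b).card : ℤ) =
        (m : ℤ) - (Q ((x + m*b : ℕ) : ℤ) (wfun x m b g) (((c.val : ℕ) : ℤ) + (t : ℤ) * b)
          - Q ((x + m*b : ℕ) : ℤ) (wfun x m b g) ((c.val : ℕ) : ℤ)) := by
    intro t ht1 htm
    have hsum : (m - t) * b + t * b = m * b := by
      rw [← Nat.add_mul]; congr 1; omega
    have hcompl := Finset.card_filter_add_card_filter_not
      (s := (Finset.univ : Finset (Fin m)))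
      (p := fun j => (g j + c).val + 1 ≤ x + (m - t) * b)
    have hcard2 : (Finset.univ.filter fun j => ¬ ((g j + c).val + 1 ≤ x + (m - t) * b)) =
        (Finset.univ.filter fun j => (x + m * b) - t * b ≤ (g j + c).val) := by
      apply Finset.filter_congr; intro j _
      constructor
      · intro h; simp only [not_le] at h; omega
      · intro h; simp only [not_le]; omega
    have htail := card_tail hb hm g c (t * b) (by
      have : t * b ≤ m * b := Nat.mul_le_mul_right _ htm
      omega)
    have hcast : (((c.val : ℕ) : ℤ) + ((t * b : ℕ) : ℤ)) = ((c.val : ℕ) : ℤ) + (t:ℤ) * b := by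
      push_cast; ring
    rw [hcast] at htail
    rw [hcard2] at hcompl
    have hcardu : (Finset.univ : Finset (Fin m)).card = m := by simp
    rw [hcardu] at hcompl
    have hc1 : ((Finset.univ.filter fun j => (g j + c).val + 1 ≤ x + (m - t) * b).card : ℤ)
        + ((Finset.univ.filter fun j => (x + m * b) - t * b ≤ (g j + c).val).card : ℤ) = m := by
      exact_mod_cast congrArg (Nat.cast : ℕ → ℤ) hcompl
    omega
  constructor
  · intro h t ht1 htm
    have hi : m - t < m := by omega
    have h1 := h (m - t) hi
    have h2 := key t ht1 htm
    have h1' : ((m - t : ℕ) : ℤ) + 1 ≤ ((Finset.univ.filter fun j =>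
        (g j + c).val + 1 ≤ x + (m - t) * b).card : ℤ) := by exact_mod_cast h1
    have hmt : ((m - t : ℕ) : ℤ) = (m:ℤ) - t := by omega
    omega
  · intro h i hi
    have ht1 : 1 ≤ m - i := by omega
    have htm : m - i ≤ m := by omega
    have h2 := key (m - i) ht1 htm
    have h3 := h (m - i) ht1 htm
    have hmi : m - (m - i) = i := by omega
    rw [hmi] at h2
    have hmt : ((m - i : ℕ) : ℤ) = (m:ℤ) - i := by omega
    have : ((i:ℤ)) + 1 ≤ ((Finset.univ.filter fun j => (g j + c).val + 1 ≤ x + i * b).card : ℤ) := by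
      omega
    exact_mod_cast this

theorem cycle_zmod [NeZero (x + m * b)] (hb : 0 < b) (hm : 0 < m)
    (g : Fin m → ZMod (x + m * b)) :
    (Finset.univ.filter fun c : ZMod (x + m * b) =>
      ∀ i : ℕ, i < m →
        i + 1 ≤ (Finset.univ.filter fun j => (g j + c).val + 1 ≤ x + i * b).card).card = x := by
  have hMm : ((x + m*b : ℕ) : ℤ) = (x : ℤ) + m * b := by push_cast; ring
  classical
  have hbij : (Finset.univ.filter fun c : ZMod (x + m * b) =>
      ∀ i : ℕ, i < m →
        i + 1 ≤ (Finset.univ.filter fun j => (g j + c).val + 1 ≤ x + i * b).card).card =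
      ((Finset.range (x + m * b)).filter fun d : ℕ =>
        Good m b ((x + m*b : ℕ) : ℤ) (wfun x m b g) (d : ℤ)).card := by
    refine Finset.card_nbij' (fun c => c.val) (fun d => (d : ZMod (x + m*b))) ?_ ?_ ?_ ?_
    · intro c hc
      simp only [Finset.mem_coe, Finset.mem_filter, Finset.mem_univ, true_and] at hc
      simp only [Finset.mem_coe, Finset.mem_filter, Finset.mem_range]
      exact ⟨ZMod.val_lt c, (goodZ_iff hb hm g c).1 hc⟩
    · intro d hd
      simp only [Finset.mem_coe, Finset.mem_filter, Finset.mem_range] at hd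
      simp only [Finset.mem_coe, Finset.mem_filter, Finset.mem_univ, true_and]
      apply (goodZ_iff hb hm g ((d : ZMod (x + m*b)))).2
      rw [ZMod.val_cast_of_lt hd.1]
      exact hd.2
    · intro c hc
      exact ZMod.natCast_rightInverse c
    · intro d hd
      simp only [Finset.mem_coe, Finset.mem_filter, Finset.mem_range] at hd
      exact ZMod.val_cast_of_lt hd.1
  rw [hbij]
  exact good_count hb hm hMm

end zmod
end PFaux

namespace PFaux
open Finset

section apps
variable {m b : ℕ}

/-- the `q`-colored parking condition on `ZMod (q + m*b)` functions -/
def GZ (m b q : ℕ) (g : Fin m → ZMod (q + m * b)) : Prop :=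
  ∀ i : ℕ, i < m → i + 1 ≤ (Finset.univ.filter fun j => (g j).val + 1 ≤ q + i * b).card

instance (m b q : ℕ) : DecidablePred (GZ m b q) := fun g =>
  inferInstanceAs (Decidable (∀ i : ℕ, i < m →
    i + 1 ≤ (Finset.univ.filter fun j => (g j).val + 1 ≤ q + i * b).card))

lemma card_shift {n : ℕ} [NeZero n] (P : (Fin m → ZMod n) → Prop) [DecidablePred P]
    (c : ZMod n) :
    (Finset.univ.filter fun h : Fin m → ZMod n => P (fun j => h j + c)).card =
      (Finset.univ.filter P).card := by
  refine Finset.card_nbij' (fun h => fun j => h j + c) (fun g => fun j => g j - c)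
    ?_ ?_ ?_ ?_
  · intro h hh
    simp only [Finset.mem_coe, Finset.mem_filter, Finset.mem_univ, true_and] at hh ⊢
    exact hh
  · intro g hg
    simp only [Finset.mem_coe, Finset.mem_filter, Finset.mem_univ, true_and] at hg ⊢
    have : (fun j => g j - c + c) = g := by funext j; ring
    rw [this]; exact hg
  · intro h _; funext j; ring
  · intro g _; funext j; ring

lemma colored_card (hb : 0 < b) (hm : 0 < m) (q : ℕ) [NeZero (q + m * b)] :
    (Finset.univ.filter (GZ m b q)).card = q * (q + m * b) ^ (m - 1) := by
  classical
  have hM : 0 < q + m * b := Nat.pos_of_ne_zero (NeZero.ne _)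
  have hdouble : ∑ h : Fin m → ZMod (q + m * b),
      (Finset.univ.filter fun c : ZMod (q + m * b) => GZ m b q (fun j => h j + c)).card =
      (q + m * b) ^ m * q := by
    have hone : ∀ h : Fin m → ZMod (q + m * b),
        (Finset.univ.filter fun c : ZMod (q + m * b) => GZ m b q (fun j => h j + c)).card = q := by
      intro h
      exact cycle_zmod hb hm h
    rw [Finset.sum_congr rfl fun h _ => hone h, Finset.sum_const, smul_eq_mul]
    congr 1
    rw [Finset.card_univ, Fintype.card_fun, ZMod.card, Fintype.card_fin]
  have hswap : ∑ h : Fin m → ZMod (q + m * b),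
      (Finset.univ.filter fun c : ZMod (q + m * b) => GZ m b q (fun j => h j + c)).card =
      (q + m * b) * (Finset.univ.filter (GZ m b q)).card := by
    have e1 : ∀ h : Fin m → ZMod (q + m * b),
        (Finset.univ.filter fun c : ZMod (q + m * b) => GZ m b q (fun j => h j + c)).card =
        ∑ c : ZMod (q + m * b), if GZ m b q (fun j => h j + c) then 1 else 0 := by
      intro h; rw [Finset.sum_boole]; simp
    rw [Finset.sum_congr rfl fun h _ => e1 h, Finset.sum_comm]
    have e2 : ∀ c : ZMod (q + m * b),
        (∑ h : Fin m → ZMod (q + m * b), if GZ m b q (fun j => h j + c) then 1 else 0) =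
        (Finset.univ.filter (GZ m b q)).card := by
      intro c
      rw [Finset.sum_boole]
      simp only [Nat.cast_id]
      exact card_shift (GZ m b q) c
    rw [Finset.sum_congr rfl fun c _ => e2 c, Finset.sum_const, smul_eq_mul, Finset.card_univ,
      ZMod.card]
  have hfin : (q + m * b) * (Finset.univ.filter (GZ m b q)).card = (q + m * b) ^ m * q := by
    rw [← hswap, hdouble]
  have hm1 : m - 1 + 1 = m := Nat.succ_pred_eq_of_pos hm
  have h9 : (q + m * b) ^ m = (q + m * b) ^ (m - 1) * (q + m * b) := by
    calc (q + m*b)^m = (q+m*b)^(m-1+1) := by rw [hm1]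
      _ = (q+m*b)^(m-1) * (q+m*b) := pow_succ _ _
  have h10 : (q + m * b) ^ m * q = (q + m * b) * (q * (q + m * b) ^ (m - 1)) := by
    rw [h9]; ring
  exact Nat.eq_of_mul_eq_mul_left hM (hfin.trans h10)

end apps
end PFaux

/-- The finite set of `(1,b)`-parking functions of length `m`, encoded as
functions `Fin m → Fin (1 + (m-1)*b)`, where the value of car `k` is
`(π k : ℕ) + 1`. -/
def abpf1 (b m : ℕ) : Finset (Fin m → Fin (1 + (m - 1) * b)) :=
  Finset.univ.filter (fun π =>
    ∀ i : Fin m,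
      (i : ℕ) + 1 ≤ (Finset.univ.filter (fun k => (π k : ℕ) + 1 ≤ 1 + (i : ℕ) * b)).card)

namespace PFaux
open Finset

section fiber
variable {m b : ℕ}

/-- bound on values of colored parking functions -/
lemma GZ_bound (hm : 0 < m) {q : ℕ} [NeZero (q + m * b)] {h : Fin m → ZMod (q + m * b)}
    (hg : GZ m b q h) (j : Fin m) : (h j).val + 1 ≤ q + (m - 1) * b := by
  have h1 := hg (m - 1) (by omega)
  have h2 : (Finset.univ.filter fun k => (h k).val + 1 ≤ q + (m-1) * b) = Finset.univ := by
    apply Finset.eq_univ_of_card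
    have hle := Finset.card_le_univ (Finset.univ.filter fun k => (h k).val + 1 ≤ q + (m-1) * b)
    simp only [Finset.card_univ, Fintype.card_fin] at hle ⊢
    omega
  have := Finset.mem_filter.1 (h2 ▸ Finset.mem_univ j)
  exact this.2

/-- the projection from colored parking functions to ordinary ones -/
def Psi (m b q : ℕ) (h : Fin m → ZMod (q + m * b)) : Fin m → Fin (1 + (m - 1) * b) :=
  fun j => ⟨min ((h j).val + 1 - q) ((m - 1) * b), by omega⟩

lemma mb_le : (m - 1) * b ≤ m * b := Nat.mul_le_mul_right _ (Nat.sub_le _ _)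

lemma Psi_mem (hb : 0 < b) (hm : 0 < m) {q : ℕ} (hq : 0 < q) [NeZero (q + m * b)]
    {h : Fin m → ZMod (q + m * b)} (hg : GZ m b q h) : Psi m b q h ∈ abpf1 b m := by
  rw [abpf1, Finset.mem_filter]
  refine ⟨Finset.mem_univ _, ?_⟩
  intro i
  have hcond := hg (i : ℕ) i.isLt
  have heq : (Finset.univ.filter fun k => (Psi m b q h k : ℕ) + 1 ≤ 1 + (i:ℕ) * b) =
      (Finset.univ.filter fun k => (h k).val + 1 ≤ q + (i:ℕ) * b) := by
    apply Finset.filter_congr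
    intro k _
    have hbk := GZ_bound hm hg k
    have hpk : (Psi m b q h k : ℕ) = (h k).val + 1 - q := by
      simp only [Psi]
      omega
    rw [hpk]
    constructor
    · intro hle; omega
    · intro hle; omega
  rw [heq]
  exact hcond

lemma fiber_eq (hb : 0 < b) (hm : 0 < m) {q : ℕ} (hq : 0 < q) [NeZero (q + m * b)]
    (π : Fin m → Fin (1 + (m - 1) * b)) (hπ : π ∈ abpf1 b m) :
    (Finset.univ.filter (GZ m b q)).filter (fun h => Psi m b q h = π) =
      Fintype.piFinset (fun j => if (π j : ℕ) = 0 then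
        (Finset.univ.filter fun z : ZMod (q + m * b) => z.val < q)
        else {(((π j : ℕ) + q - 1 : ℕ) : ZMod (q + m * b))}) := by
  have hMpos : 0 < q + m * b := Nat.pos_of_ne_zero (NeZero.ne _)
  have hπj : ∀ j, (π j : ℕ) ≤ (m - 1) * b := fun j => by
    have := (π j).isLt; omega
  have hvalc : ∀ j, (π j : ℕ) ≠ 0 →
      ((((π j : ℕ) + q - 1 : ℕ) : ZMod (q + m * b))).val = (π j : ℕ) + q - 1 := by
    intro j hj
    apply ZMod.val_cast_of_lt
    have := hπj j
    have := mb_le (m := m) (b := b)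
    omega
  ext h
  simp only [Finset.mem_filter, Finset.mem_univ, true_and, Fintype.mem_piFinset]
  constructor
  · rintro ⟨hg, hpsi⟩
    intro j
    have hbk := GZ_bound hm hg j
    have hpj : (Psi m b q h j : ℕ) = (h j).val + 1 - q := by
      simp only [Psi]; omega
    have hval : (Psi m b q h j : ℕ) = (π j : ℕ) := by rw [hpsi]
    by_cases h0 : (π j : ℕ) = 0
    · rw [if_pos h0]
      simp only [Finset.mem_filter, Finset.mem_univ, true_and]
      omega
    · rw [if_neg h0]
      rw [Finset.mem_singleton]
      have hvv : (h j).val = (π j : ℕ) + q - 1 := by omega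
      calc h j = (((h j).val : ℕ) : ZMod (q + m * b)) := (ZMod.natCast_rightInverse (h j)).symm
        _ = (((π j : ℕ) + q - 1 : ℕ) : ZMod (q + m * b)) := by rw [hvv]
  · intro hmem
    -- first establish the value facts
    have hvals : ∀ j, ((π j : ℕ) = 0 ∧ (h j).val < q) ∨
        ((π j : ℕ) ≠ 0 ∧ (h j).val = (π j : ℕ) + q - 1) := by
      intro j
      have := hmem j
      by_cases h0 : (π j : ℕ) = 0
      · rw [if_pos h0] at this
        simp only [Finset.mem_filter, Finset.mem_univ, true_and] at this
        exact Or.inl ⟨h0, this⟩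
      · rw [if_neg h0, Finset.mem_singleton] at this
        refine Or.inr ⟨h0, ?_⟩
        rw [this, hvalc j h0]
    have hcondeq : ∀ i : ℕ, i < m →
        (Finset.univ.filter fun k => (h k).val + 1 ≤ q + i * b) =
        (Finset.univ.filter fun k => (π k : ℕ) + 1 ≤ 1 + i * b) := by
      intro i hi
      apply Finset.filter_congr
      intro k _
      rcases hvals k with ⟨h0, hlt⟩ | ⟨h0, heq⟩
      · rw [h0]; constructor
        · intro _; omega
        · intro _; omega
      · rw [heq]; constructor
        · intro hle; omega
        · intro hle; omega
    have hg : GZ m b q h := by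
      intro i hi
      rw [hcondeq i hi]
      rw [abpf1, Finset.mem_filter] at hπ
      exact hπ.2 ⟨i, hi⟩
    refine ⟨hg, ?_⟩
    funext j
    apply Fin.ext
    have hbk := GZ_bound hm hg j
    have hpj : (Psi m b q h j : ℕ) = (h j).val + 1 - q := by
      simp only [Psi]; omega
    rcases hvals j with ⟨h0, hlt⟩ | ⟨h0, heq⟩
    · omega
    · omega

lemma fiber_card (hb : 0 < b) (hm : 0 < m) {q : ℕ} (hq : 0 < q) [NeZero (q + m * b)]
    (π : Fin m → Fin (1 + (m - 1) * b)) (hπ : π ∈ abpf1 b m) :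
    ((Finset.univ.filter (GZ m b q)).filter (fun h => Psi m b q h = π)).card =
      q ^ (Finset.univ.filter (fun i => (π i : ℕ) = 0)).card := by
  rw [fiber_eq hb hm hq π hπ, Fintype.card_piFinset]
  have hsmall : (Finset.univ.filter fun z : ZMod (q + m * b) => z.val < q).card = q := by
    conv_rhs => rw [← Finset.card_range q]
    refine Finset.card_nbij' (fun z => z.val) (fun r => ((r : ℕ) : ZMod (q + m * b))) ?_ ?_ ?_ ?_
    · intro z hz
      simp only [Finset.mem_coe, Finset.mem_filter, Finset.mem_univ, true_and] at hz
      exact Finset.mem_range.2 hz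
    · intro r hr
      have hrq : r < q := Finset.mem_range.1 hr
      simp only [Finset.mem_coe, Finset.mem_filter, Finset.mem_univ, true_and]
      rw [ZMod.val_cast_of_lt (by omega : r < q + m * b)]
      exact hrq
    · intro z _; exact ZMod.natCast_rightInverse z
    · intro r hr
      have hrq : r < q := Finset.mem_range.1 hr
      exact ZMod.val_cast_of_lt (by omega : r < q + m * b)
  have hterm : ∀ j : Fin m, (if (π j : ℕ) = 0 then
      (Finset.univ.filter fun z : ZMod (q + m * b) => z.val < q)
      else {(((π j : ℕ) + q - 1 : ℕ) : ZMod (q + m * b))}).card =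
      if (π j : ℕ) = 0 then q else 1 := by
    intro j
    by_cases h0 : (π j : ℕ) = 0
    · rw [if_pos h0, if_pos h0, hsmall]
    · rw [if_neg h0, if_neg h0, Finset.card_singleton]
  rw [Finset.prod_congr rfl fun j _ => hterm j, Finset.prod_ite, Finset.prod_const,
    Finset.prod_const, one_pow, mul_one]

theorem ones_count (hb : 0 < b) (hm : 0 < m) {q : ℕ} (hq : 0 < q) [NeZero (q + m * b)] :
    ∑ π ∈ abpf1 b m, q ^ (Finset.univ.filter (fun i => (π i : ℕ) = 0)).card =
      q * (q + m * b) ^ (m - 1) := by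
  classical
  rw [← colored_card hb hm q]
  rw [Finset.card_eq_sum_card_fiberwise (f := Psi m b q) (t := abpf1 b m) (fun h hh => by
    simp only [Finset.mem_coe, Finset.mem_filter, Finset.mem_univ, true_and] at hh
    exact Psi_mem hb hm hq hh)]
  apply Finset.sum_congr rfl
  intro π hπ
  exact (fiber_card hb hm hq π hπ).symm

end fiber
end PFaux

namespace PFaux
open Finset

section lel
variable {m b : ℕ}

lemma lel_all (hb : 0 < b) (hm : 0 < m) [NeZero (1 + m * b)] (z0 : Fin m) (t : ℚ) :
    ∑ f : Fin m → ZMod (1 + m * b),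
        t ^ (Finset.univ.filter fun i => f i = f z0).card =
      (1 + m * b : ℚ) * (t * (t + m * b) ^ (m - 1)) := by
  classical
  have hstep1 : ∀ f : Fin m → ZMod (1 + m * b),
      t ^ (Finset.univ.filter fun i => f i = f z0).card =
      ∏ i : Fin m, (if f i = f z0 then t else 1) := by
    intro f
    rw [Finset.prod_ite, Finset.prod_const, Finset.prod_const, one_pow, mul_one]
  rw [Finset.sum_congr rfl fun f _ => hstep1 f]
  rw [← Finset.sum_fiberwise_of_maps_to (g := fun f : Fin m → ZMod (1 + m * b) => f z0)
    (t := Finset.univ) (fun f _ => Finset.mem_univ _)]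
  have hfib : ∀ v : ZMod (1 + m * b),
      ∑ f ∈ Finset.univ.filter (fun f : Fin m → ZMod (1 + m * b) => f z0 = v),
        ∏ i : Fin m, (if f i = f z0 then t else 1) =
      t * (t + m * b) ^ (m - 1) := by
    intro v
    have hsetsum : ∑ f ∈ Finset.univ.filter (fun f : Fin m → ZMod (1 + m * b) => f z0 = v),
        ∏ i : Fin m, (if f i = f z0 then t else 1) =
        ∑ f ∈ Finset.univ.filter (fun f : Fin m → ZMod (1 + m * b) => f z0 = v),
        ∏ i : Fin m, (if f i = v then t else 1) := by
      apply Finset.sum_congr rfl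
      intro f hf
      simp only [Finset.mem_filter, Finset.mem_univ, true_and] at hf
      rw [hf]
    rw [hsetsum]
    have hset : Finset.univ.filter (fun f : Fin m → ZMod (1 + m * b) => f z0 = v) =
        Fintype.piFinset (fun i => if i = z0 then {v} else Finset.univ) := by
      ext f
      simp only [Finset.mem_filter, Finset.mem_univ, true_and, Fintype.mem_piFinset]
      constructor
      · intro hfz i
        by_cases hi : i = z0
        · subst hi; rw [if_pos rfl, Finset.mem_singleton]; exact hfz
        · rw [if_neg hi]; exact Finset.mem_univ _
      · intro hall
        have := hall z0
        rw [if_pos rfl, Finset.mem_singleton] at this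
        exact this
    rw [hset]
    have hswap2 : (∑ f ∈ Fintype.piFinset (fun i : Fin m => if i = z0 then {v} else
          (Finset.univ : Finset (ZMod (1 + m * b)))),
        ∏ i : Fin m, (if f i = v then t else 1)) =
        ∏ i : Fin m, ∑ y ∈ (if i = z0 then {v} else
          (Finset.univ : Finset (ZMod (1 + m * b)))), (if y = v then t else 1) :=
      (Finset.prod_univ_sum (fun i : Fin m => if i = z0 then {v} else Finset.univ)
        (fun _ y => if y = v then t else 1)).symm
    rw [hswap2]
    have hfactor : ∀ i : Fin m,
        (∑ y ∈ (if i = z0 then {v} else Finset.univ),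
          (if y = v then t else 1)) = if i = z0 then t else (t + m * b) := by
      intro i
      by_cases hi : i = z0
      · rw [if_pos hi, if_pos hi, Finset.sum_singleton, if_pos rfl]
      · rw [if_neg hi, if_neg hi]
        rw [Finset.sum_ite, Finset.sum_const, Finset.sum_const]
        have h1 : (Finset.univ.filter fun y : ZMod (1 + m * b) => y = v) = {v} := by
          rw [Finset.filter_eq']; exact if_pos (Finset.mem_univ _)
        have h2 : (Finset.univ.filter fun y : ZMod (1 + m * b) => ¬ y = v) =
            Finset.univ.erase v := by
          ext y; simp [Finset.mem_erase, and_comm]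
        rw [h1, h2, Finset.card_singleton, Finset.card_erase_of_mem (Finset.mem_univ _),
          Finset.card_univ, ZMod.card]
        have h3 : (1 + m * b - 1 : ℕ) = m * b := by omega
        rw [h3]
        simp only [one_smul, nsmul_eq_mul, mul_one]
        push_cast
        ring
    rw [Finset.prod_congr rfl fun i _ => hfactor i]
    rw [Finset.prod_ite, Finset.prod_const, Finset.prod_const]
    have h1 : (Finset.univ.filter fun i : Fin m => i = z0) = {z0} := by
      rw [Finset.filter_eq']; exact if_pos (Finset.mem_univ _)
    have h2 : (Finset.univ.filter fun i : Fin m => ¬ i = z0) = Finset.univ.erase z0 := by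
      ext y; simp [Finset.mem_erase, and_comm]
    rw [h1, h2, Finset.card_singleton, Finset.card_erase_of_mem (Finset.mem_univ _),
      Finset.card_univ, Fintype.card_fin, pow_one]
  rw [Finset.sum_congr rfl fun v _ => hfib v, Finset.sum_const, Finset.card_univ, ZMod.card,
    nsmul_eq_mul]
  push_cast
  ring

lemma lel_orbit (hb : 0 < b) (hm : 0 < m) [NeZero (1 + m * b)] (z0 : Fin m) (t : ℚ) :
    ∑ f : Fin m → ZMod (1 + m * b),
        t ^ (Finset.univ.filter fun i => f i = f z0).card =
      (1 + m * b : ℚ) * ∑ g ∈ Finset.univ.filter (GZ m b 1),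
        t ^ (Finset.univ.filter fun i => g i = g z0).card := by
  classical
  have hone : ∀ f : Fin m → ZMod (1 + m * b),
      (∑ c : ZMod (1 + m * b), if GZ m b 1 (fun j => f j + c) then (1:ℚ) else 0) = 1 := by
    intro f
    rw [Finset.sum_boole]
    have := cycle_zmod (x := 1) hb hm f
    have heq : (Finset.univ.filter fun c : ZMod (1 + m * b) => GZ m b 1 (fun j => f j + c)) =
        (Finset.univ.filter fun c : ZMod (1 + m * b) => ∀ i : ℕ, i < m →
          i + 1 ≤ (Finset.univ.filter fun j => (f j + c).val + 1 ≤ 1 + i * b).card) := rfl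
    rw [heq, this]
    norm_num
  calc ∑ f : Fin m → ZMod (1 + m * b), t ^ (Finset.univ.filter fun i => f i = f z0).card
      = ∑ f : Fin m → ZMod (1 + m * b), (∑ c : ZMod (1 + m * b),
          if GZ m b 1 (fun j => f j + c) then (1:ℚ) else 0) *
          t ^ (Finset.univ.filter fun i => f i = f z0).card := by
        apply Finset.sum_congr rfl
        intro f _
        rw [hone f, one_mul]
    _ = ∑ c : ZMod (1 + m * b), ∑ f : Fin m → ZMod (1 + m * b),
          (if GZ m b 1 (fun j => f j + c) then (1:ℚ) else 0) *
          t ^ (Finset.univ.filter fun i => f i = f z0).card := by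
        rw [← Finset.sum_comm]
        apply Finset.sum_congr rfl
        intro f _
        rw [Finset.sum_mul]
    _ = ∑ c : ZMod (1 + m * b), ∑ g : Fin m → ZMod (1 + m * b),
          (if GZ m b 1 g then (1:ℚ) else 0) *
          t ^ (Finset.univ.filter fun i => g i = g z0).card := by
        apply Finset.sum_congr rfl
        intro c _
        apply Fintype.sum_equiv (Equiv.piCongrRight fun _ : Fin m => Equiv.addRight c)
        intro f
        have he : (Equiv.piCongrRight fun _ : Fin m => Equiv.addRight c) f =
            fun j => f j + c := rfl
        rw [he]
        have h2 : (Finset.univ.filter fun i =>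
            (fun j => f j + c) i = (fun j => f j + c) z0) =
            (Finset.univ.filter fun i => f i = f z0) := by
          apply Finset.filter_congr
          intro i _
          show ((fun j => f j + c) i = (fun j => f j + c) z0) ↔ (f i = f z0)
          simp
        rw [h2]
    _ = (1 + m * b : ℚ) * ∑ g ∈ Finset.univ.filter (GZ m b 1),
          t ^ (Finset.univ.filter fun i => g i = g z0).card := by
        rw [Finset.sum_const]
        rw [Finset.card_univ, ZMod.card, nsmul_eq_mul]
        congr 1
        · push_cast; ring
        · rw [Finset.sum_filter]
          apply Finset.sum_congr rfl
          intro g _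
          by_cases hg : GZ m b 1 g
          · rw [if_pos hg, if_pos hg, one_mul]
          · rw [if_neg hg, if_neg hg, zero_mul]

end lel
end PFaux

namespace PFaux
open Finset

section bridge
variable {m b : ℕ}

lemma lel_bridge (hb : 0 < b) (hm : 0 < m) [NeZero (1 + m * b)] (z0 : Fin m) (t : ℚ) :
    ∑ π ∈ abpf1 b m, t ^ (Finset.univ.filter fun i => π i = π z0).card =
      ∑ g ∈ Finset.univ.filter (GZ m b 1),
        t ^ (Finset.univ.filter fun i => g i = g z0).card := by
  classical
  have hmble := mb_le (m := m) (b := b)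
  have hlt : ∀ π : Fin m → Fin (1 + (m - 1) * b), ∀ j, (π j : ℕ) < 1 + m * b := by
    intro π j
    have := (π j).isLt
    omega
  refine Finset.sum_nbij' (fun π => fun j => (((π j : ℕ) : ZMod (1 + m * b))))
    (Psi m b 1) ?_ ?_ ?_ ?_ ?_
  · intro π hπ
    simp only [Finset.mem_filter, Finset.mem_univ, true_and]
    intro i hi
    have hval : ∀ k, (((π k : ℕ) : ZMod (1 + m * b))).val = (π k : ℕ) := fun k =>
      ZMod.val_cast_of_lt (hlt π k)
    have heq : (Finset.univ.filter fun k =>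
        ((((π k : ℕ) : ZMod (1 + m * b)))).val + 1 ≤ 1 + i * b) =
        (Finset.univ.filter fun k => (π k : ℕ) + 1 ≤ 1 + i * b) := by
      apply Finset.filter_congr
      intro k _
      rw [hval k]
    rw [heq]
    rw [abpf1, Finset.mem_filter] at hπ
    exact hπ.2 ⟨i, hi⟩
  · intro g hg
    simp only [Finset.mem_filter, Finset.mem_univ, true_and] at hg
    exact Psi_mem hb hm Nat.one_pos hg
  · intro π hπ
    funext j
    apply Fin.ext
    have hval : (((π j : ℕ) : ZMod (1 + m * b))).val = (π j : ℕ) :=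
      ZMod.val_cast_of_lt (hlt π j)
    simp only [Psi, hval]
    have := (π j).isLt
    omega
  · intro g hg
    simp only [Finset.mem_filter, Finset.mem_univ, true_and] at hg
    funext j
    have hbk := GZ_bound hm hg j
    have hpj : (Psi m b 1 g j : ℕ) = (g j).val := by
      simp only [Psi]
      omega
    show (((Psi m b 1 g j : ℕ) : ZMod (1 + m * b))) = g j
    rw [hpj]
    exact ZMod.natCast_rightInverse (g j)
  · intro π hπ
    congr 1
    beta_reduce
    apply congrArg Finset.card
    apply Finset.filter_congr
    intro i _
    constructor
    · intro h; rw [h]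
    · intro h
      have h2 : (((π i : ℕ) : ZMod (1 + m * b))).val = (((π z0 : ℕ) : ZMod (1 + m * b))).val := by
        rw [h]
      rw [ZMod.val_cast_of_lt (hlt π i), ZMod.val_cast_of_lt (hlt π z0)] at h2
      exact Fin.ext h2

theorem lel_final (hb : 0 < b) (hm : 0 < m) (z0 : Fin m) (t : ℚ) :
    ∑ π ∈ abpf1 b m, t ^ (Finset.univ.filter fun i => π i = π z0).card =
      t * (t + m * b) ^ (m - 1) := by
  haveI : NeZero (1 + m * b) := ⟨by positivity⟩
  have h1 := lel_bridge hb hm z0 t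
  have h2 := lel_orbit hb hm z0 t
  have h3 := lel_all hb hm z0 t
  have hNne : (1 + m * b : ℚ) ≠ 0 := by positivity
  apply mul_left_cancel₀ hNne
  rw [h1, ← h2, h3]

theorem ones_final (hb : 0 < b) (hm : 0 < m) (t : ℚ) :
    ∑ π ∈ abpf1 b m, t ^ (Finset.univ.filter fun i => (π i : ℕ) = 0).card =
      t * (t + m * b) ^ (m - 1) := by
  classical
  set P : Polynomial ℚ :=
    ∑ π ∈ abpf1 b m, Polynomial.X ^ (Finset.univ.filter fun i => (π i : ℕ) = 0).card with hP
  set Qp : Polynomial ℚ :=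
    Polynomial.X * (Polynomial.X + Polynomial.C ((m : ℚ) * b)) ^ (m - 1) with hQp
  have heval : ∀ x : ℚ, P.eval x = ∑ π ∈ abpf1 b m,
      x ^ (Finset.univ.filter fun i => (π i : ℕ) = 0).card := by
    intro x
    rw [hP, Polynomial.eval_finset_sum]
    apply Finset.sum_congr rfl
    intro π _
    rw [Polynomial.eval_pow, Polynomial.eval_X]
  have hevalQ : ∀ x : ℚ, Qp.eval x = x * (x + m * b) ^ (m - 1) := by
    intro x
    rw [hQp]
    simp [Polynomial.eval_mul, Polynomial.eval_pow, Polynomial.eval_add, Polynomial.eval_X,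
      Polynomial.eval_C]
  have hagree : ∀ n : ℕ, 0 < n → P.eval (n : ℚ) = Qp.eval (n : ℚ) := by
    intro n hn
    haveI : NeZero (n + m * b) := ⟨by positivity⟩
    have hc := ones_count (q := n) hb hm hn
    rw [heval, hevalQ]
    have hcast : ∑ π ∈ abpf1 b m, ((n:ℚ)) ^ (Finset.univ.filter fun i => (π i : ℕ) = 0).card =
        ((∑ π ∈ abpf1 b m, n ^ (Finset.univ.filter fun i => (π i : ℕ) = 0).card : ℕ) : ℚ) := by
      push_cast
      rfl
    rw [hcast, hc]
    push_cast
    ring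
  have hinf : {x : ℚ | P.eval x = Qp.eval x}.Infinite := by
    apply Set.infinite_of_injective_forall_mem (f := fun n : ℕ => ((n + 1 : ℕ) : ℚ))
    · intro a c h
      simp only at h
      have : (a + 1 : ℕ) = (c + 1 : ℕ) := by exact_mod_cast h
      omega
    · intro n
      exact hagree (n + 1) (Nat.succ_pos n)
  have hPQ : P = Qp := Polynomial.eq_of_infinite_eval_eq P Qp hinf
  rw [← heval, hPQ, hevalQ]

end bridge
end PFaux

theorem gf_lel_and_ones_1b (b m : ℕ) (hb : 1 ≤ b) (hm : 1 ≤ m) (t : ℚ) :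
    (∑ π ∈ abpf1 b m,
        t ^ (Finset.univ.filter (fun i => π i = π ⟨0, by omega⟩)).card =
      t * (t + m * b) ^ (m - 1)) ∧
    (∑ π ∈ abpf1 b m,
        t ^ (Finset.univ.filter (fun i => (π i : ℕ) = 0)).card =
      t * (t + m * b) ^ (m - 1)) := by
  constructor
  · exact PFaux.lel_final hb hm ⟨0, by omega⟩ t
  · exact PFaux.ones_final hb hm t
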